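/- Let H be a real Hilbert space and x, y ∈ H with x ≠ 0. Then the infimum of D(x, y|P), taken over all orthogonal projections P onto closed subspaces of H, equals |⟨x, y⟩|; in particular it is attained by the rank-one projection P_x onto the span of x, for which D(x, y|P_x) = |⟨x, y⟩|. -/

import Mathlib

open scoped RealInnerProductSpace

lemma D_attained {H : Type*} [NormedAddCommGroup H]
    [InnerProductSpace ℝ H] [CompleteSpace H] (x y : H) (hx : x ≠ 0) :
    ‖(Submodule.orthogonalProjectionOnto (ℝ ∙ x) x : H)‖ * ‖(Submodule.orthogonalProjectionOnto (ℝ ∙ x) y : H)‖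
      + ‖x - (Submodule.orthogonalProjectionOnto (ℝ ∙ x) x : H)‖ * ‖y - (Submodule.orthogonalProjectionOnto (ℝ ∙ x) y : H)‖
      = |⟪x, y⟫| := by
  have hxmem : x ∈ (ℝ ∙ x) := Submodule.mem_span_singleton_self x
  have h1 : (Submodule.orthogonalProjectionOnto (ℝ ∙ x) x : H) = x :=
    Submodule.starProjection_eq_self_iff.mpr hxmem
  have h2 : (Submodule.orthogonalProjectionOnto (ℝ ∙ x) y : H) = (⟪x, y⟫ / ‖x‖ ^ 2) • x :=
    Submodule.starProjection_singleton ℝ y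
  rw [h1, h2, sub_self, norm_zero, zero_mul, add_zero, norm_smul]
  have hnx : ‖x‖ ≠ 0 := norm_ne_zero_iff.mpr hx
  rw [Real.norm_eq_abs, abs_div]
  rw [abs_of_nonneg (by positivity : (0:ℝ) ≤ ‖x‖ ^ 2)]
  field_simp

lemma D_lower {H : Type*} [NormedAddCommGroup H]
    [InnerProductSpace ℝ H] [CompleteSpace H] (x y : H) (V : Submodule ℝ H)
    [Submodule.HasOrthogonalProjection V] :
    |⟪x, y⟫| ≤ ‖(Submodule.orthogonalProjectionOnto V x : H)‖ * ‖(Submodule.orthogonalProjectionOnto V y : H)‖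
      + ‖x - (Submodule.orthogonalProjectionOnto V x : H)‖ * ‖y - (Submodule.orthogonalProjectionOnto V y : H)‖ := by
  set px : H := (Submodule.orthogonalProjectionOnto V x : H)
  set py : H := (Submodule.orthogonalProjectionOnto V y : H)
  have hxo : x - px ∈ Vᗮ := Submodule.sub_starProjection_mem_orthogonal x
  have hyo : y - py ∈ Vᗮ := Submodule.sub_starProjection_mem_orthogonal y
  have hcross1 : ⟪px, y - py⟫ = 0 :=
    hyo px (Submodule.orthogonalProjectionOnto V x).2
  have hcross2 : ⟪x - px, py⟫ = 0 := by
    rw [real_inner_comm]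
    exact hxo py (Submodule.orthogonalProjectionOnto V y).2
  have hdecomp : ⟪x, y⟫ = ⟪px, py⟫ + ⟪x - px, y - py⟫ := by
    have : ⟪px + (x - px), py + (y - py)⟫ = ⟪px, py⟫ + ⟪x - px, y - py⟫ := by
      simp only [inner_add_left, inner_add_right, hcross1, hcross2]
      ring
    simpa using this
  calc |⟪x, y⟫| ≤ |⟪px, py⟫| + |⟪x - px, y - py⟫| := by
        rw [hdecomp]; exact abs_add_le _ _
    _ ≤ ‖px‖ * ‖py‖ + ‖x - px‖ * ‖y - py‖ :=
        add_le_add (abs_real_inner_le_norm _ _) (abs_real_inner_le_norm _ _)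

theorem inf_D_eq_abs_inner {H : Type*} [NormedAddCommGroup H]
    [InnerProductSpace ℝ H] [CompleteSpace H] (x y : H) (hx : x ≠ 0) :
    IsLeast {d : ℝ | ∃ (V : Submodule ℝ H) (_ : Submodule.HasOrthogonalProjection V),
        d = ‖(Submodule.orthogonalProjectionOnto V x : H)‖ * ‖(Submodule.orthogonalProjectionOnto V y : H)‖
          + ‖x - (Submodule.orthogonalProjectionOnto V x : H)‖ * ‖y - (Submodule.orthogonalProjectionOnto V y : H)‖}
      |⟪x, y⟫| ∧
    ‖(Submodule.orthogonalProjectionOnto (ℝ ∙ x) x : H)‖ * ‖(Submodule.orthogonalProjectionOnto (ℝ ∙ x) y : H)‖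
      + ‖x - (Submodule.orthogonalProjectionOnto (ℝ ∙ x) x : H)‖ * ‖y - (Submodule.orthogonalProjectionOnto (ℝ ∙ x) y : H)‖
      = |⟪x, y⟫| := by
  refine ⟨⟨⟨ℝ ∙ x, inferInstance, (D_attained x y hx).symm⟩, ?_⟩, D_attained x y hx⟩
  rintro d ⟨V, hV, rfl⟩
  exact D_lower x y V
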